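/- For r = 1, D₁(γ, δ) ≥ 0 implies |δ| ≥ 2, with equality achievable only at γ = ±1 (i.e., if D₁(γ,δ) ≥ 0 and |δ| = 2 then γ² = 1 and D₁(γ,δ) = 0). -/
import Mathlib

noncomputable def D (r γ δ : ℝ) : ℝ :=
  δ^6*r^2 - 2*δ^4*(γ^2*(2 + 2*r - r^2) + (2*r^3 + 2*r^4 - r^2))
  - δ^2*(γ^4*(8 + 8*r - r^2) + (8*r^4 + 8*r^3 - r^2)
      - 2*γ^2*(10*r + 19*r^2 + 10*r^3))
  - 4*(1 + r)*(r + γ^2)^3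

theorem D_one_nonneg_bound (γ δ : ℝ) (h : 0 ≤ D 1 γ δ) :
    2 ≤ |δ| ∧ (|δ| = 2 → γ^2 = 1 ∧ D 1 γ δ = 0) := by
  have hD : D 1 γ δ = -(((4-δ^2)+5*(γ^2-1))^2 * ((4-δ^2)-4*(γ^2-1))
      + 108*(γ^2-1)^2*γ^2) := by
    unfold D; ring
  have hD' : D 1 γ δ = -(((4-δ^2)+8*(γ^2-1)) * ((4-δ^2)-(γ^2-1))^2
      + 108*(γ^2-1)^2) := by
    unfold D; ring
  have hg : (0:ℝ) ≤ γ^2 := sq_nonneg γ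
  have h2 : 2 ≤ |δ| := by
    by_contra hlt
    push_neg at hlt
    have hx : δ^2 < 4 := by
      have := sq_abs δ
      nlinarith [abs_nonneg δ]
    rcases le_or_gt (γ^2) 1 with hc | hc
    · rw [hD] at h
      have hpos : (0:ℝ) < (4-δ^2)-4*(γ^2-1) := by nlinarith
      have hA : (0:ℝ) ≤ ((4-δ^2)+5*(γ^2-1))^2 * ((4-δ^2)-4*(γ^2-1)) :=
        mul_nonneg (sq_nonneg _) hpos.le
      have hB : (0:ℝ) ≤ (γ^2-1)^2 * γ^2 := mul_nonneg (sq_nonneg _) hg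
      have hA0 : ((4-δ^2)+5*(γ^2-1))^2 * ((4-δ^2)-4*(γ^2-1)) = 0 := by linarith
      have hB0 : (γ^2-1)^2 * γ^2 = 0 := by linarith
      have hsq : ((4-δ^2)+5*(γ^2-1))^2 = 0 := by
        rcases mul_eq_zero.mp hA0 with h' | h'
        · exact h'
        · exact absurd h' hpos.ne'
      have h5 : (4-δ^2)+5*(γ^2-1) = 0 := by
        exact pow_eq_zero_iff (n := 2) (by norm_num) |>.mp hsq
      rcases mul_eq_zero.mp hB0 with h' | h'
      · have : γ^2 = 1 := by
          have := pow_eq_zero_iff (n := 2) (by norm_num) |>.mp h'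
          linarith
        nlinarith
      · nlinarith [sq_nonneg δ]
    · rw [hD'] at h
      nlinarith [sq_nonneg ((4-δ^2)-(γ^2-1)), sq_nonneg (γ^2-1),
        mul_nonneg (by nlinarith : (0:ℝ) ≤ (4-δ^2)+8*(γ^2-1)) (sq_nonneg ((4-δ^2)-(γ^2-1)))]
  refine ⟨h2, fun he => ?_⟩
  have hx4 : δ^2 = 4 := by
    have := sq_abs δ
    rw [he] at this; nlinarith
  rw [hD'] at h
  have hg1 : γ^2 = 1 := by nlinarith [sq_nonneg (γ^2-1)]
  refine ⟨hg1, ?_⟩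
  rw [hD', hx4, hg1]; ring
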